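/- Let X = Σ_{m=1}^{M} a_m ψ_{i_m} ψ_{j_m}* with i_m ≥ 0, j_m < 0, and g = e^X (a finite exponential since X is nilpotent in the adjoint action on Λ_k). Then g^{−1}(Λ_k + cΛ_{−1})g = Λ_k + cΛ_{−1} + Σ_m a_m(ψ_{i_m−k} ψ_{j_m}* − ψ_{i_m} ψ_{j_m+k}*) − Σ_{n,m} δ_{i_m, j_n+k} a_m a_n ψ_{i_n} ψ_{j_m}* + c Σ_m a_m(ψ_{i_m+1} ψ_{j_m}* − ψ_{i_m} ψ_{j_m−1}*). -/

import Mathlib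

set_option linter.unusedSectionVars false
set_option linter.unreachableTactic false
set_option linter.unusedTactic false
set_option linter.unnecessarySeqFocus false
set_option maxHeartbeats 1000000

open Finset

section micro
variable {R : Type*} [Ring R] [Algebra ℚ R]

lemma stmt4_half {z : R} (h : z + z = 0) : z = 0 := by
  have h2 : (2 : ℚ) • z = 0 := by rw [two_smul]; exact h
  have := congrArg (fun w => ((2 : ℚ)⁻¹) • w) h2
  simpa [smul_smul] using this

variable (ψ ψs : ℤ → R)

lemma stmt4_psi_sq (h2 : ∀ i j : ℤ, ψ i * ψ j + ψ j * ψ i = 0) (p : ℤ) :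
    ψ p * ψ p = 0 := stmt4_half (h2 p p)

lemma stmt4_psis_sq (h3 : ∀ i j : ℤ, ψs i * ψs j + ψs j * ψs i = 0) (p : ℤ) :
    ψs p * ψs p = 0 := stmt4_half (h3 p p)

lemma stmt4_kill (h1 : ∀ i j : ℤ, ψ i * ψs j + ψs j * ψ i = if i = j then 1 else 0)
    (h2 : ∀ i j : ℤ, ψ i * ψ j + ψ j * ψ i = 0)
    (p q b : ℤ) (hpq : p ≠ q) : (ψ p * ψs q) * (ψ p * ψs b) = 0 := by
  have e1 : ψs q * ψ p = (if p = q then (1:R) else 0) - ψ p * ψs q :=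
    eq_sub_of_add_eq' (h1 p q)
  rw [if_neg hpq, zero_sub] at e1
  calc (ψ p * ψs q) * (ψ p * ψs b) = ψ p * (ψs q * ψ p) * ψs b := by noncomm_ring
    _ = ψ p * (-(ψ p * ψs q)) * ψs b := by rw [e1]
    _ = -((ψ p * ψ p) * (ψs q * ψs b)) := by noncomm_ring
    _ = 0 := by rw [stmt4_psi_sq ψ h2 p]; simp

lemma stmt4_absorb (h1 : ∀ i j : ℤ, ψ i * ψs j + ψs j * ψ i = if i = j then 1 else 0)
    (h3 : ∀ i j : ℤ, ψs i * ψs j + ψs j * ψs i = 0)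
    (p q b : ℤ) : (ψ p * ψs q) * (ψ b * ψs q) = if b = q then ψ p * ψs q else 0 := by
  have e1 : ψs q * ψ b = (if b = q then (1:R) else 0) - ψ b * ψs q :=
    eq_sub_of_add_eq' (h1 b q)
  calc (ψ p * ψs q) * (ψ b * ψs q) = ψ p * (ψs q * ψ b) * ψs q := by noncomm_ring
    _ = ψ p * ((if b = q then (1:R) else 0) - ψ b * ψs q) * ψs q := by rw [e1]
    _ = (if b = q then (1:R) else 0) * (ψ p * ψs q) - (ψ p * ψ b) * (ψs q * ψs q) := by
        split_ifs <;> noncomm_ring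
    _ = if b = q then ψ p * ψs q else 0 := by
        rw [stmt4_psis_sq ψs h3 q]; split_ifs <;> simp

lemma stmt4_qcomm (h1 : ∀ i j : ℤ, ψ i * ψs j + ψs j * ψ i = if i = j then 1 else 0)
    (h2 : ∀ i j : ℤ, ψ i * ψ j + ψ j * ψ i = 0)
    (h3 : ∀ i j : ℤ, ψs i * ψs j + ψs j * ψs i = 0)
    (A b u v : ℤ) :
    (ψ A * ψs b) * (ψ u * ψs v) - (ψ u * ψs v) * (ψ A * ψs b)
      = (if u = b then ψ A * ψs v else 0) - (if A = v then ψ u * ψs b else 0) := by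
  have e1 : ψs b * ψ u = (if u = b then (1:R) else 0) - ψ u * ψs b :=
    eq_sub_of_add_eq' (h1 u b)
  have e2 : ψs v * ψ A = (if A = v then (1:R) else 0) - ψ A * ψs v :=
    eq_sub_of_add_eq' (h1 A v)
  have e3 : ψ A * ψ u = -(ψ u * ψ A) := eq_neg_of_add_eq_zero_left (h2 A u)
  have e4 : ψs b * ψs v = -(ψs v * ψs b) := eq_neg_of_add_eq_zero_left (h3 b v)
  have c1 : (ψ A * ψs b) * (ψ u * ψs v)
      = (if u = b then (1:R) else 0) * (ψ A * ψs v) - (ψ A * ψ u) * (ψs b * ψs v) := by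
    calc (ψ A * ψs b) * (ψ u * ψs v) = ψ A * (ψs b * ψ u) * ψs v := by noncomm_ring
      _ = ψ A * ((if u = b then (1:R) else 0) - ψ u * ψs b) * ψs v := by rw [e1]
      _ = (if u = b then (1:R) else 0) * (ψ A * ψs v) - (ψ A * ψ u) * (ψs b * ψs v) := by
          split_ifs <;> noncomm_ring
  have c2 : (ψ u * ψs v) * (ψ A * ψs b)
      = (if A = v then (1:R) else 0) * (ψ u * ψs b) - (ψ u * ψ A) * (ψs v * ψs b) := by
    calc (ψ u * ψs v) * (ψ A * ψs b) = ψ u * (ψs v * ψ A) * ψs b := by noncomm_ring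
      _ = ψ u * ((if A = v then (1:R) else 0) - ψ A * ψs v) * ψs b := by rw [e2]
      _ = (if A = v then (1:R) else 0) * (ψ u * ψs b) - (ψ u * ψ A) * (ψs v * ψs b) := by
          split_ifs <;> noncomm_ring
  rw [c1, c2, e3, e4]
  split_ifs <;> noncomm_ring

lemma stmt4_qswap (h1 : ∀ i j : ℤ, ψ i * ψs j + ψs j * ψ i = if i = j then 1 else 0)
    (h2 : ∀ i j : ℤ, ψ i * ψ j + ψ j * ψ i = 0)
    (h3 : ∀ i j : ℤ, ψs i * ψs j + ψs j * ψs i = 0)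
    {A b u v : ℤ} (hub : u ≠ b) (hAv : A ≠ v) :
    (ψ A * ψs b) * (ψ u * ψs v) = (ψ u * ψs v) * (ψ A * ψs b) := by
  have := stmt4_qcomm ψ ψs h1 h2 h3 A b u v
  rw [if_neg hub, if_neg hAv, sub_zero] at this
  exact sub_eq_zero.mp this

end micro
open Finset

section abstractlem
variable {R : Type*} [Ring R]

/-- `(A+B)^(n+1) = B^(n+1) + (n+1) • (A * B^n)` for commuting `A B` with `A^2 = 0`. -/
lemma stmt4_binom_sq (A B : R) (hc : A * B = B * A) (hs : A * A = 0) :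
    ∀ n : ℕ, (A + B) ^ (n + 1) = B ^ (n + 1) + (n + 1) • (A * B ^ n) := by
  have hcp : ∀ n : ℕ, A * B ^ n = B ^ n * A := fun n =>
    (Commute.pow_right (hc) n).eq
  intro n
  induction n with
  | zero => simp; abel
  | succ n ih =>
    have h0 : (A + B) ^ (n + 2) = (A + B) ^ (n + 1) * (A + B) := by rw [← pow_succ]
    rw [h0, ih]
    have expand : (B ^ (n + 1) + (n + 1) • (A * B ^ n)) * (A + B)
        = B ^ (n + 1) * A + B ^ (n + 2) + (n + 1) • (A * B ^ n * A)
          + (n + 1) • (A * B ^ (n + 1)) := by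
      simp only [add_mul, smul_mul_assoc, mul_add, pow_succ]
      abel_nf
      noncomm_ring
    rw [expand]
    have z1 : A * B ^ n * A = 0 := by rw [hcp n, mul_assoc, hs, mul_zero]
    have z2 : B ^ (n + 1) * A = A * B ^ (n + 1) := (hcp (n + 1)).symm
    rw [z1, z2, smul_zero, add_zero]
    simp only [succ_nsmul]
    abel

/-- Power of a sum of commuting square-zero elements. -/
lemma stmt4_sum_pow {ι : Type*} [DecidableEq ι] (f : ι → R)
    (hc : ∀ a b, Commute (f a) (f b)) (hs : ∀ a, f a * f a = 0) :
    ∀ (n : ℕ) (s : Finset ι),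
      (∑ m ∈ s, f m) ^ n
        = n.factorial • ∑ T ∈ Finset.powersetCard n s,
            T.noncommProd f (fun a _ b _ _ => hc a b) := by
  intro n s
  induction s using Finset.induction_on generalizing n with
  | empty =>
    cases n with
    | zero => simp; exact (Finset.noncommProd_empty _ _).symm
    | succ n =>
      rw [Finset.powersetCard_eq_empty.mpr (by simp)]
      simp
  | @insert a s ha ih =>
    cases n with
    | zero => simp; exact (Finset.noncommProd_empty _ _).symm
    | succ n =>
      have hAB : f a * (∑ m ∈ s, f m) = (∑ m ∈ s, f m) * f a :=
        (Commute.sum_right s f (f a) (fun b _ => hc a b)).eq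
      have haT : ∀ {T : Finset ι} {n'}, T ∈ Finset.powersetCard n' s → a ∉ T :=
        fun hT hmem => ha ((Finset.mem_powersetCard.mp hT).1 hmem)
      calc (∑ m ∈ insert a s, f m) ^ (n + 1)
          = (f a + ∑ m ∈ s, f m) ^ (n + 1) := by rw [Finset.sum_insert ha]
        _ = (∑ m ∈ s, f m) ^ (n + 1) + (n + 1) • (f a * (∑ m ∈ s, f m) ^ n) :=
            stmt4_binom_sq (f a) _ hAB (hs a) n
        _ = (n + 1).factorial • ∑ T ∈ Finset.powersetCard (n + 1) s,
              T.noncommProd f (fun a _ b _ _ => hc a b)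
            + (n + 1).factorial • (f a * ∑ T ∈ Finset.powersetCard n s,
              T.noncommProd f (fun a _ b _ _ => hc a b)) := by
            rw [ih (n + 1), ih n]
            congr 1
            rw [mul_smul_comm, smul_smul, ← Nat.factorial_succ]
        _ = (n + 1).factorial • ∑ T ∈ Finset.powersetCard (n + 1) (insert a s),
              T.noncommProd f (fun a _ b _ _ => hc a b) := by
            rw [← smul_add]
            congr 1
            rw [Finset.powersetCard_succ_insert ha, Finset.sum_union, Finset.mul_sum,
              Finset.sum_image (fun T hT T' hT' h => by
                rw [← Finset.erase_insert (haT hT), h, Finset.erase_insert (haT hT')])]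
            · congr 1
              refine Finset.sum_congr rfl (fun T hT => ?_)
              exact (Finset.noncommProd_insert_of_notMem _ _ _ _ (haT hT)).symm
            · rw [Finset.disjoint_left]
              intro T hT hT'
              rcases Finset.mem_image.mp hT' with ⟨T', _, rfl⟩
              exact haT hT (Finset.mem_insert_self a T')

end abstractlem
open Finset

/-- Reindex a square double sum supported on the triangle `p+q < N`. -/
lemma stmt4_tri {R : Type*} [AddCommMonoid R] (N : ℕ) (F : ℕ → ℕ → R)
    (hF : ∀ p q, N ≤ p + q → F p q = 0) :
    ∑ p ∈ range N, ∑ q ∈ range N, F p q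
      = ∑ n ∈ range N, ∑ p ∈ range (n + 1), F p (n - p) := by
  rw [← Finset.sum_product']
  rw [show (∑ n ∈ range N, ∑ p ∈ range (n + 1), F p (n - p))
      = ∑ x ∈ (range N).sigma (fun n => range (n + 1)), F x.2 (x.1 - x.2) from
    (Finset.sum_sigma (range N) (fun n => range (n + 1)) (fun x => F x.2 (x.1 - x.2))).symm]
  have step1 : ∑ x ∈ range N ×ˢ range N, F x.1 x.2
      = ∑ x ∈ (range N ×ˢ range N).filter (fun x => x.1 + x.2 < N), F x.1 x.2 :=
    (Finset.sum_filter_of_ne (fun x _ hx => by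
      by_contra h
      exact hx (hF x.1 x.2 (le_of_not_gt h)))).symm
  rw [step1]
  refine Finset.sum_nbij' (fun x => ⟨x.1 + x.2, x.1⟩) (fun y => (y.2, y.1 - y.2))
    ?_ ?_ ?_ ?_ ?_
  · intro x hx
    simp only [Finset.mem_filter, Finset.mem_product, Finset.mem_range] at hx
    simp only [Finset.mem_sigma, Finset.mem_range]
    omega
  · intro y hy
    simp only [Finset.mem_sigma, Finset.mem_range] at hy
    simp only [Finset.mem_filter, Finset.mem_product, Finset.mem_range]
    omega
  · intro x hx
    simp only [Finset.mem_filter, Finset.mem_product, Finset.mem_range] at hx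
    dsimp only
    simp only [Prod.ext_iff]
    constructor <;> simp <;> omega
  · intro y hy
    simp only [Finset.mem_sigma, Finset.mem_range] at hy
    dsimp only
    ext <;> simp <;> omega
  · intro x hx
    simp only [Finset.mem_filter, Finset.mem_product, Finset.mem_range] at hx
    dsimp only
    congr 1
    omega

lemma stmt4_ratsum (n : ℕ) :
    ∑ p ∈ range (n + 1), ((-1 : ℚ) ^ p * (p.factorial : ℚ)⁻¹ * ((n - p).factorial : ℚ)⁻¹)
      = if n = 0 then 1 else 0 := by
  have key : ∀ p ∈ range (n + 1),
      ((-1 : ℚ) ^ p * (p.factorial : ℚ)⁻¹ * ((n - p).factorial : ℚ)⁻¹)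
        = ((-1 : ℚ) ^ p * (n.choose p : ℚ)) * ((n.factorial : ℚ))⁻¹ := by
    intro p hp
    have hpn : p ≤ n := Nat.lt_succ_iff.mp (Finset.mem_range.mp hp)
    have hfac : (n.choose p : ℚ) * (p.factorial : ℚ) * ((n - p).factorial : ℚ)
        = (n.factorial : ℚ) := by
      exact_mod_cast congrArg (Nat.cast : ℕ → ℚ)
        (Nat.choose_mul_factorial_mul_factorial hpn)
    have h1 : (p.factorial : ℚ) ≠ 0 := Nat.cast_ne_zero.mpr p.factorial_ne_zero
    have h2 : ((n - p).factorial : ℚ) ≠ 0 := Nat.cast_ne_zero.mpr (n - p).factorial_ne_zero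
    have h3 : (n.factorial : ℚ) ≠ 0 := Nat.cast_ne_zero.mpr n.factorial_ne_zero
    field_simp
    linear_combination -hfac
  rw [Finset.sum_congr rfl key, ← Finset.sum_mul]
  have hint := Int.alternating_sum_range_choose (n := n)
  have hq : (∑ p ∈ range (n + 1), (-1 : ℚ) ^ p * (n.choose p : ℚ))
      = if n = 0 then 1 else 0 := by
    exact_mod_cast congrArg (Int.cast : ℤ → ℚ) hint
  rw [hq]
  split_ifs with h
  · subst h; simp
  · simp

section conj
variable {R : Type*} [Ring R] [Algebra ℚ R]

lemma stmt4_conj (M : ℕ) (X Y D E g gi : R)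
    (hYX : Y * X = X * Y - D)
    (hDX : D * X = X * D - E)
    (hEX : E * X = X * E)
    (hX1 : X ^ (M + 1) = 0)
    (hXE : X ^ M * E = 0)
    (hXD : (2 : ℚ) • (X ^ M * D) = (M : ℚ) • (X ^ (M - 1) * E))
    (hg : g = ∑ n ∈ Finset.range (M + 1), ((n.factorial : ℚ)⁻¹) • X ^ n)
    (hgi : gi = ∑ n ∈ Finset.range (M + 1), ((-1 : ℚ) ^ n * (n.factorial : ℚ)⁻¹) • X ^ n) :
    gi * Y * g = Y - D + (2 : ℚ)⁻¹ • E := by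
  have pw : ∀ (a : ℕ) (W : R), X ^ a * (X * W) = X ^ (a + 1) * W := by
    intro a W; rw [pow_succ, mul_assoc]
  have lemYX : ∀ q : ℕ, Y * X ^ q
      = X ^ q * Y - ((q : ℚ)) • (X ^ (q - 1) * D)
        + (((q.choose 2 : ℕ) : ℚ)) • (X ^ (q - 2) * E) := by
    intro q
    induction q with
    | zero => simp
    | succ q ih =>
      have h0 : Y * X ^ (q + 1) = (Y * X ^ q) * X := by rw [pow_succ, ← mul_assoc]
      rw [h0, ih]
      have e1 : (X ^ q * Y - (q : ℚ) • (X ^ (q - 1) * D)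
            + (((q.choose 2 : ℕ) : ℚ)) • (X ^ (q - 2) * E)) * X
          = X ^ q * (Y * X) - (q : ℚ) • (X ^ (q - 1) * (D * X))
            + (((q.choose 2 : ℕ) : ℚ)) • (X ^ (q - 2) * (E * X)) := by
        simp only [sub_mul, add_mul, smul_mul_assoc, mul_assoc]
      rw [e1, hYX, hDX, hEX]
      rcases q with _ | _ | n
      · simp [mul_sub]
      · norm_num [mul_sub, smul_sub, pow_one, pow_zero]
        rw [show (X * (X * Y)) = X ^ 2 * Y from by rw [← mul_assoc, ← pow_two]]
        module
      · have r0 : n + 1 + 1 = n + 2 := by omega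
        have r1 : n + 1 + 1 + 1 = n + 3 := by omega
        rw [r0] at *
        rw [r1]
        have r2 : n + 2 - 1 = n + 1 := by omega
        have r3 : n + 2 - 2 = n := by omega
        have r4 : n + 3 - 1 = n + 2 := by omega
        have r5 : n + 3 - 2 = n + 1 := by omega
        rw [r2, r3, r4, r5]
        have harith : (((n + 3).choose 2 : ℕ) : ℚ)
            = (((n + 2).choose 2 : ℕ) : ℚ) + ((n : ℚ) + 2) := by
          have hnn : (n + 3).choose 2 = (n + 2).choose 2 + (n + 2) := by
            rw [Nat.choose_succ_succ (n + 2) 1]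
            simp [Nat.choose_one_right]
            omega
          rw [hnn]; push_cast; ring
        simp only [mul_sub, smul_sub, pw]
        rw [harith]
        push_cast
        module
  rcases M with _ | M'
  · -- M = 0
    have hX0 : X = 0 := by simpa using hX1
    have hD0 : D = 0 := by
      have h2 : (2 : ℚ) • D = 0 := by simpa [hX0] using hXD
      have := congrArg (fun w => ((2 : ℚ)⁻¹) • w) h2
      simpa [smul_smul] using this
    have hE0 : E = 0 := by simpa using hXE
    rw [hg, hgi]
    simp [hX0, hD0, hE0]
  set M := M' + 1 with hM
  have hXn : ∀ n : ℕ, M + 1 ≤ n → X ^ n = 0 := by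
    intro n hn
    have : X ^ n = X ^ (M + 1) * X ^ (n - (M + 1)) := by
      rw [← pow_add]; congr 1; omega
    rw [this, hX1, zero_mul]
  -- gi * X^n for top powers
  have hgiXM : gi * X ^ M = X ^ M := by
    rw [hgi, Finset.sum_mul]
    rw [Finset.sum_eq_single_of_mem 0 (Finset.mem_range.mpr (Nat.succ_pos M))
      (fun p _ hpne => by
        rw [smul_mul_assoc, ← pow_add, hXn (p + M) (by omega), smul_zero])]
    simp
  have hgiXM' : gi * X ^ M' = X ^ M' - X ^ M := by
    rw [hgi, Finset.sum_mul, Finset.sum_range_succ']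
    have hcol : ∑ p ∈ Finset.range (M' + 1),
        (((-1 : ℚ) ^ (p + 1) * ((p + 1).factorial : ℚ)⁻¹) • X ^ (p + 1)) * X ^ M'
        = -X ^ M := by
      rw [Finset.sum_eq_single_of_mem 0 (Finset.mem_range.mpr (Nat.succ_pos M'))
        (fun p _ hpne => by
          rw [smul_mul_assoc, ← pow_add, hXn (p + 1 + M') (by omega), smul_zero])]
      rw [smul_mul_assoc, ← pow_add]
      norm_num
      rw [show 1 + M' = M from by omega]
    rw [hcol]
    simp only [pow_zero, Nat.factorial_zero, Nat.cast_one, inv_one, one_mul, one_smul]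
    abel
  -- gi * g = 1
  have hgig : gi * g = 1 := by
    rw [hgi, hg, Finset.sum_mul_sum]
    have step1 : ∀ p ∈ Finset.range (M + 1), ∀ q ∈ Finset.range (M + 1),
        (((-1 : ℚ) ^ p * (p.factorial : ℚ)⁻¹) • X ^ p) * (((q.factorial : ℚ)⁻¹) • X ^ q)
          = (((-1 : ℚ) ^ p * (p.factorial : ℚ)⁻¹) * ((q.factorial : ℚ))⁻¹) • X ^ (p + q) := by
      intro p _ q _
      rw [smul_mul_assoc, mul_smul_comm, smul_smul, ← pow_add]
    rw [Finset.sum_congr rfl (fun p hp => Finset.sum_congr rfl (fun q hq => step1 p hp q hq))]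
    rw [stmt4_tri (M + 1)
      (fun p q => (((-1 : ℚ) ^ p * (p.factorial : ℚ)⁻¹) * ((q.factorial : ℚ))⁻¹) • X ^ (p + q))
      (fun p q hpq => by rw [hXn (p + q) hpq, smul_zero])]
    have step2 : ∀ n ∈ Finset.range (M + 1),
        ∑ p ∈ Finset.range (n + 1),
          (((-1 : ℚ) ^ p * (p.factorial : ℚ)⁻¹) * (((n - p).factorial : ℚ))⁻¹) • X ^ (p + (n - p))
        = (if n = 0 then (1 : ℚ) else 0) • X ^ n := by
      intro n _
      have e : ∀ p ∈ Finset.range (n + 1),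
          (((-1 : ℚ) ^ p * (p.factorial : ℚ)⁻¹) * (((n - p).factorial : ℚ))⁻¹) • X ^ (p + (n - p))
          = (((-1 : ℚ) ^ p * (p.factorial : ℚ)⁻¹) * (((n - p).factorial : ℚ))⁻¹) • X ^ n := by
        intro p hp
        congr 2
        have := Finset.mem_range.mp hp
        omega
      rw [Finset.sum_congr rfl e, ← Finset.sum_smul]
      congr 1
      have := stmt4_ratsum n
      rw [← this]
    rw [Finset.sum_congr rfl step2]
    simp only [ite_smul, zero_smul, one_smul]
    rw [Finset.sum_ite_eq' (Finset.range (M + 1)) 0 (fun n => X ^ n)]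
    simp
  -- partial sums of gi * X^q
  have P1 : ∑ q ∈ Finset.range (M + 1), ((q.factorial : ℚ)⁻¹) • (gi * X ^ q) = 1 := by
    rw [← hgig, hg, Finset.mul_sum]
    exact Finset.sum_congr rfl fun q _ => (mul_smul_comm _ _ _).symm
  have P2 : ∑ q ∈ Finset.range M, ((q.factorial : ℚ)⁻¹) • (gi * X ^ q)
      = 1 - ((M.factorial : ℚ))⁻¹ • X ^ M := by
    have h := P1
    rw [Finset.sum_range_succ, hgiXM] at h
    exact eq_sub_of_add_eq h
  have P3 : ∑ q ∈ Finset.range M', ((q.factorial : ℚ)⁻¹) • (gi * X ^ q)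
      = 1 - ((M.factorial : ℚ))⁻¹ • X ^ M - ((M'.factorial : ℚ))⁻¹ • (X ^ M' - X ^ M) := by
    have h := P2
    rw [hM, Finset.sum_range_succ, hgiXM', ← hM] at h
    exact eq_sub_of_add_eq h
  -- coefficient identities
  have hco1 : ∀ q : ℕ, ((q + 1).factorial : ℚ)⁻¹ * (((q + 1) : ℕ) : ℚ) = (q.factorial : ℚ)⁻¹ := by
    intro q
    have h1 : ((q + 1).factorial : ℚ) = ((q + 1 : ℕ) : ℚ) * (q.factorial : ℚ) := by
      rw [Nat.factorial_succ]; push_cast; ring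
    have h2 : (q.factorial : ℚ) ≠ 0 := Nat.cast_ne_zero.mpr q.factorial_ne_zero
    have h3 : ((q + 1 : ℕ) : ℚ) ≠ 0 := by push_cast; positivity
    rw [h1, mul_inv]
    field_simp
  have hco2 : ∀ q : ℕ, ((q + 2).factorial : ℚ)⁻¹ * (((q + 2).choose 2 : ℕ) : ℚ)
      = 2⁻¹ * (q.factorial : ℚ)⁻¹ := by
    intro q
    have h0 : ((q + 2).choose 2) * 2 * q.factorial = (q + 2).factorial := by
      have h := Nat.choose_mul_factorial_mul_factorial (show 2 ≤ q + 2 by omega)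
      simpa [show q + 2 - 2 = q from by omega, show Nat.factorial 2 = 2 from rfl] using h
    have h0' : (((q + 2).choose 2 : ℕ) : ℚ) * 2 * (q.factorial : ℚ) = ((q + 2).factorial : ℚ) := by
      exact_mod_cast congrArg (Nat.cast : ℕ → ℚ) h0
    have h2 : (q.factorial : ℚ) ≠ 0 := Nat.cast_ne_zero.mpr q.factorial_ne_zero
    have h3 : ((q + 2).factorial : ℚ) ≠ 0 := Nat.cast_ne_zero.mpr (q + 2).factorial_ne_zero
    field_simp
    linear_combination h0'
  -- expand Y * g
  have hYg : Y * g
      = (∑ q ∈ Finset.range (M + 1), ((q.factorial : ℚ)⁻¹) • (X ^ q * Y))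
        - (∑ q ∈ Finset.range (M + 1),
            ((q.factorial : ℚ)⁻¹ * (q : ℚ)) • (X ^ (q - 1) * D))
        + (∑ q ∈ Finset.range (M + 1),
            ((q.factorial : ℚ)⁻¹ * ((q.choose 2 : ℕ) : ℚ)) • (X ^ (q - 2) * E)) := by
    rw [hg, Finset.mul_sum]
    have e : ∀ q ∈ Finset.range (M + 1), Y * (((q.factorial : ℚ)⁻¹) • X ^ q)
        = ((q.factorial : ℚ)⁻¹) • (X ^ q * Y)
          - ((q.factorial : ℚ)⁻¹ * (q : ℚ)) • (X ^ (q - 1) * D)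
          + ((q.factorial : ℚ)⁻¹ * ((q.choose 2 : ℕ) : ℚ)) • (X ^ (q - 2) * E) := by
      intro q _
      rw [mul_smul_comm, lemYX q, smul_add, smul_sub, smul_smul, smul_smul]
    rw [Finset.sum_congr rfl e, Finset.sum_add_distrib, Finset.sum_sub_distrib]
  have T1 : gi * (∑ q ∈ Finset.range (M + 1), ((q.factorial : ℚ)⁻¹) • (X ^ q * Y)) = Y := by
    rw [Finset.mul_sum]
    have e : ∀ q ∈ Finset.range (M + 1), gi * (((q.factorial : ℚ)⁻¹) • (X ^ q * Y))
        = (((q.factorial : ℚ)⁻¹) • (gi * X ^ q)) * Y := by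
      intro q _; rw [mul_smul_comm, ← mul_assoc, ← smul_mul_assoc]
    rw [Finset.sum_congr rfl e, ← Finset.sum_mul, P1, one_mul]
  have T2 : gi * (∑ q ∈ Finset.range (M + 1),
        ((q.factorial : ℚ)⁻¹ * (q : ℚ)) • (X ^ (q - 1) * D))
      = D - ((M.factorial : ℚ))⁻¹ • (X ^ M * D) := by
    rw [Finset.mul_sum]
    have e : ∀ q ∈ Finset.range (M + 1),
        gi * (((q.factorial : ℚ)⁻¹ * (q : ℚ)) • (X ^ (q - 1) * D))
        = (((q.factorial : ℚ)⁻¹ * (q : ℚ)) • (gi * X ^ (q - 1))) * D := by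
      intro q _; rw [mul_smul_comm, ← mul_assoc, ← smul_mul_assoc]
    rw [Finset.sum_congr rfl e, Finset.sum_range_succ']
    have e2 : ∀ q ∈ Finset.range M,
        ((((q + 1).factorial : ℚ)⁻¹ * ((q + 1 : ℕ) : ℚ)) • (gi * X ^ (q + 1 - 1))) * D
        = (((q.factorial : ℚ)⁻¹) • (gi * X ^ q)) * D := by
      intro q _
      rw [hco1 q, Nat.add_sub_cancel]
    rw [Finset.sum_congr rfl e2]
    simp only [Nat.cast_zero, mul_zero, zero_smul, zero_mul, add_zero]
    rw [← Finset.sum_mul, P2, sub_mul, one_mul, smul_mul_assoc]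
  have T3 : gi * (∑ q ∈ Finset.range (M + 1),
        ((q.factorial : ℚ)⁻¹ * ((q.choose 2 : ℕ) : ℚ)) • (X ^ (q - 2) * E))
      = (2 : ℚ)⁻¹ • E - ((2 : ℚ)⁻¹ * (M'.factorial : ℚ)⁻¹) • (X ^ M' * E) := by
    rw [Finset.mul_sum]
    have e : ∀ q ∈ Finset.range (M + 1),
        gi * (((q.factorial : ℚ)⁻¹ * ((q.choose 2 : ℕ) : ℚ)) • (X ^ (q - 2) * E))
        = (((q.factorial : ℚ)⁻¹ * ((q.choose 2 : ℕ) : ℚ)) • (gi * X ^ (q - 2))) * E := by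
      intro q _; rw [mul_smul_comm, ← mul_assoc, ← smul_mul_assoc]
    rw [Finset.sum_congr rfl e, Finset.sum_range_succ']
    simp only [show Nat.choose 0 2 = 0 from rfl, Nat.cast_zero, mul_zero, zero_smul,
      zero_mul, add_zero]
    rw [show (Finset.range M) = Finset.range (M' + 1) from by rw [hM]]
    rw [Finset.sum_range_succ']
    simp only [show Nat.choose (0 + 1) 2 = 0 from rfl, Nat.cast_zero, mul_zero, zero_smul,
      zero_mul, add_zero]
    have e2 : ∀ q ∈ Finset.range M',
        ((((q + 1 + 1).factorial : ℚ)⁻¹ * (((q + 1 + 1).choose 2 : ℕ) : ℚ))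
          • (gi * X ^ (q + 1 + 1 - 2))) * E
        = ((2 : ℚ)⁻¹) • ((((q.factorial : ℚ)⁻¹) • (gi * X ^ q)) * E) := by
      intro q _
      rw [show q + 1 + 1 = q + 2 from by omega, hco2 q, Nat.add_sub_cancel,
        ← smul_smul, smul_mul_assoc]
    rw [Finset.sum_congr rfl e2]
    rw [← Finset.smul_sum, ← Finset.sum_mul, P3]
    rw [sub_mul, sub_mul, one_mul, smul_mul_assoc, smul_mul_assoc, sub_mul, hXE]
    rw [smul_zero, sub_zero, sub_zero, smul_sub, smul_smul]
  -- final assembly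
  rw [mul_assoc, hYg, mul_add, mul_sub, T1, T2, T3]
  have hXD' : X ^ M * D = ((2 : ℚ)⁻¹ * (M : ℚ)) • (X ^ M' * E) := by
    have h' := hXD
    rw [show M - 1 = M' from rfl] at h'
    calc X ^ M * D = (2 : ℚ)⁻¹ • ((2 : ℚ) • (X ^ M * D)) := by
          rw [smul_smul]; norm_num
      _ = (2 : ℚ)⁻¹ • ((M : ℚ) • (X ^ M' * E)) := by rw [h']
      _ = ((2 : ℚ)⁻¹ * (M : ℚ)) • (X ^ M' * E) := smul_smul _ _ _
  have hcoM : (M.factorial : ℚ)⁻¹ * ((2 : ℚ)⁻¹ * (M : ℚ))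
      = (2 : ℚ)⁻¹ * (M'.factorial : ℚ)⁻¹ := by
    rw [hM]
    have h1 : ((M' + 1).factorial : ℚ) = ((M' + 1 : ℕ) : ℚ) * (M'.factorial : ℚ) := by
      rw [Nat.factorial_succ]; push_cast; ring
    have h2 : (M'.factorial : ℚ) ≠ 0 := Nat.cast_ne_zero.mpr M'.factorial_ne_zero
    have h3 : ((M' + 1 : ℕ) : ℚ) ≠ 0 := by push_cast; positivity
    rw [h1, mul_inv]
    field_simp
  rw [hXD', smul_smul, hcoM]
  abel

end conj

/-- For `X = Σ_{m=1}^{M} a_m ψ_{i_m} ψ*_{j_m}` with `i_m ≥ 0 > j_m`, and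
`g = e^X`, `g⁻¹ = e^{−X}` (finite sums, since `X^{M+1} = 0`), conjugation gives
`g⁻¹(Λ_k + cΛ_{−1})g = Λ_k + cΛ_{−1} + Σ_m a_m(ψ_{i_m−k}ψ*_{j_m} − ψ_{i_m}ψ*_{j_m+k})
− Σ_{n,m} δ_{i_m, j_n+k} a_m a_n ψ_{i_n}ψ*_{j_m}
+ c Σ_m a_m(ψ_{i_m+1}ψ*_{j_m} − ψ_{i_m}ψ*_{j_m−1})`.
The commutation of quadratic elements with `Λ_k = Σ_n ψ_n ψ*_{n+k}` is recorded as
a hypothesis. -/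
theorem stmt4 {R : Type*} [Ring R] [Algebra ℚ R]
    (ψ ψs : ℤ → R)
    (h1 : ∀ i j : ℤ, ψ i * ψs j + ψs j * ψ i = if i = j then 1 else 0)
    (h2 : ∀ i j : ℤ, ψ i * ψ j + ψ j * ψ i = 0)
    (h3 : ∀ i j : ℤ, ψs i * ψs j + ψs j * ψs i = 0)
    (Λ : ℤ → R)
    (hΛ : ∀ a b k : ℤ,
      (ψ a * ψs b) * Λ k - Λ k * (ψ a * ψs b) = ψ a * ψs (b + k) - ψ (a - k) * ψs b)
    (M : ℕ) (a : Fin M → ℚ) (i j : Fin M → ℤ)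
    (hi : ∀ m, 0 ≤ i m) (hj : ∀ m, j m < 0) (c : ℚ)
    (X : R) (hX : X = ∑ m, a m • (ψ (i m) * ψs (j m)))
    (g gi : R)
    (hg : g = ∑ n ∈ Finset.range (M + 1), ((n.factorial : ℚ)⁻¹) • X ^ n)
    (hgi : gi = ∑ n ∈ Finset.range (M + 1), ((-1 : ℚ) ^ n * (n.factorial : ℚ)⁻¹) • X ^ n)
    (k : ℤ) :
    gi * (Λ k + c • Λ (-1)) * g
      = Λ k + c • Λ (-1)
        + ∑ m, a m • (ψ (i m - k) * ψs (j m) - ψ (i m) * ψs (j m + k))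
        - ∑ p, ∑ m, (if i m = j p + k then a m * a p else 0) • (ψ (i p) * ψs (j m))
        + c • ∑ m, a m • (ψ (i m + 1) * ψs (j m) - ψ (i m) * ψs (j m - 1)) := by
  classical
  have hine : ∀ m n : Fin M, i m ≠ j n := fun m n => by
    have := hi m; have := hj n; omega
  have hΛ' : ∀ A b : ℤ, (ψ A * ψs b) * Λ (-1) - Λ (-1) * (ψ A * ψs b)
      = ψ A * ψs (b - 1) - ψ (A + 1) * ψs b := by
    intro A b
    have h := hΛ A b (-1)
    rw [show b + (-1 : ℤ) = b - 1 from by ring, show A - (-1 : ℤ) = A + 1 from by ring] at h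
    exact h
  set x : Fin M → R := fun m => a m • (ψ (i m) * ψs (j m)) with hx_def
  set DD : R := ∑ m, (a m • (ψ (i m) * ψs (j m + k) - ψ (i m - k) * ψs (j m))
      + (c * a m) • (ψ (i m) * ψs (j m - 1) - ψ (i m + 1) * ψs (j m))) with hDD
  set SS : R := ∑ p, ∑ m, (if i m = j p + k then a m * a p else 0) • (ψ (i p) * ψs (j m))
    with hSS
  set EE : R := (-2 : ℚ) • SS with hEE
  -- basic properties of the x m
  have hqswap : ∀ {A b u v : ℤ}, u ≠ b → A ≠ v →
      (ψ A * ψs b) * (ψ u * ψs v) = (ψ u * ψs v) * (ψ A * ψs b) :=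
    fun h h' => stmt4_qswap ψ ψs h1 h2 h3 h h'
  have hxcomm : ∀ m n : Fin M, Commute (x m) (x n) := by
    intro m n
    show x m * x n = x n * x m
    rw [hx_def]
    dsimp only
    rw [smul_mul_assoc, mul_smul_comm, smul_mul_assoc, mul_smul_comm,
      hqswap (hine n m) (hine m n), smul_comm]
  have hxsq : ∀ m : Fin M, x m * x m = 0 := by
    intro m
    rw [hx_def]
    dsimp only
    rw [smul_mul_assoc, mul_smul_comm, stmt4_kill ψ ψs h1 h2 _ _ _ (hine m m),
      smul_zero, smul_zero]
  have kx1 : ∀ (m : Fin M) (b : ℤ), x m * (ψ (i m) * ψs b) = 0 := by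
    intro m b
    rw [hx_def]
    dsimp only
    rw [smul_mul_assoc, stmt4_kill ψ ψs h1 h2 _ _ _ (hine m m), smul_zero]
  have kx2 : ∀ (m : Fin M) (b : ℤ), x m * (ψ b * ψs (j m)) = if b = j m then x m else 0 := by
    intro m b
    rw [hx_def]
    dsimp only
    rw [smul_mul_assoc, stmt4_absorb ψ ψs h1 h3]
    split_ifs <;> simp
  have hXsum : X = ∑ m, x m := hX
  -- commutation with Y = Λ k + c • Λ (-1)
  have hYX : (Λ k + c • Λ (-1)) * X = X * (Λ k + c • Λ (-1)) - DD := by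
    have key : X * (Λ k + c • Λ (-1)) - (Λ k + c • Λ (-1)) * X = DD := by
      rw [hX, hDD, Finset.sum_mul, Finset.mul_sum, ← Finset.sum_sub_distrib]
      refine Finset.sum_congr rfl fun m _ => ?_
      have e1 := hΛ (i m) (j m) k
      have e2 := hΛ' (i m) (j m)
      calc (a m • (ψ (i m) * ψs (j m))) * (Λ k + c • Λ (-1))
            - (Λ k + c • Λ (-1)) * (a m • (ψ (i m) * ψs (j m)))
          = a m • (((ψ (i m) * ψs (j m)) * Λ k - Λ k * (ψ (i m) * ψs (j m)))
              + c • ((ψ (i m) * ψs (j m)) * Λ (-1) - Λ (-1) * (ψ (i m) * ψs (j m)))) := by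
            simp only [mul_add, add_mul, smul_mul_assoc, mul_smul_comm, smul_add, smul_sub]
            module
        _ = a m • ((ψ (i m) * ψs (j m + k) - ψ (i m - k) * ψs (j m))
              + c • (ψ (i m) * ψs (j m - 1) - ψ (i m + 1) * ψs (j m))) := by rw [e1, e2]
        _ = a m • (ψ (i m) * ψs (j m + k) - ψ (i m - k) * ψs (j m))
              + (c * a m) • (ψ (i m) * ψs (j m - 1) - ψ (i m + 1) * ψs (j m)) := by
            rw [smul_add, smul_smul, mul_comm (a m) c]
    rw [← key]
    abel
  -- EE commutes with X
  have hqsw2 : ∀ (p m : Fin M), (ψ (i p) * ψs (j m)) * X = X * (ψ (i p) * ψs (j m)) := by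
    intro p m
    rw [hX, Finset.sum_mul, Finset.mul_sum]
    refine Finset.sum_congr rfl fun n _ => ?_
    rw [smul_mul_assoc, mul_smul_comm, hqswap (hine n m) (hine p n)]
  have hEX : EE * X = X * EE := by
    rw [hEE, smul_mul_assoc, mul_smul_comm]
    congr 1
    rw [hSS, Finset.sum_mul, Finset.mul_sum]
    refine Finset.sum_congr rfl fun p _ => ?_
    rw [Finset.sum_mul, Finset.mul_sum]
    refine Finset.sum_congr rfl fun m _ => ?_
    rw [smul_mul_assoc, mul_smul_comm, hqsw2 p m]
  have hcond : ∀ m n : Fin M, (i m - k = j n) = (i m = j n + k) := by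
    intro m n; apply propext; constructor <;> intro <;> omega
  have comm1 : ∀ n m : Fin M,
      (ψ (i n) * ψs (j n)) * (ψ (i m) * ψs (j m + k))
        - (ψ (i m) * ψs (j m + k)) * (ψ (i n) * ψs (j n))
      = -(if i n = j m + k then ψ (i m) * ψs (j n) else 0) := by
    intro n m
    have h := stmt4_qcomm ψ ψs h1 h2 h3 (i n) (j n) (i m) (j m + k)
    rw [if_neg (hine m n), zero_sub] at h
    exact h
  have comm2 : ∀ n m : Fin M,
      (ψ (i n) * ψs (j n)) * (ψ (i m - k) * ψs (j m))
        - (ψ (i m - k) * ψs (j m)) * (ψ (i n) * ψs (j n))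
      = (if i m = j n + k then ψ (i n) * ψs (j m) else 0) := by
    intro n m
    have h := stmt4_qcomm ψ ψs h1 h2 h3 (i n) (j n) (i m - k) (j m)
    rw [if_neg (hine n m), sub_zero] at h
    rw [h]
    simp only [hcond m n]
  have comm3 : ∀ n m : Fin M,
      (ψ (i n) * ψs (j n)) * (ψ (i m) * ψs (j m - 1))
        - (ψ (i m) * ψs (j m - 1)) * (ψ (i n) * ψs (j n)) = 0 := by
    intro n m
    have h := stmt4_qcomm ψ ψs h1 h2 h3 (i n) (j n) (i m) (j m - 1)
    rw [if_neg (hine m n), if_neg (show ¬ i n = j m - 1 from by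
      have := hi n; have := hj m; omega), sub_zero] at h
    exact h
  have comm4 : ∀ n m : Fin M,
      (ψ (i n) * ψs (j n)) * (ψ (i m + 1) * ψs (j m))
        - (ψ (i m + 1) * ψs (j m)) * (ψ (i n) * ψs (j n)) = 0 := by
    intro n m
    have h := stmt4_qcomm ψ ψs h1 h2 h3 (i n) (j n) (i m + 1) (j m)
    rw [if_neg (show ¬ i m + 1 = j n from by have := hi m; have := hj n; omega),
      if_neg (hine n m), sub_zero] at h
    exact h
  have hper : ∀ n m : Fin M,
      x n * (a m • (ψ (i m) * ψs (j m + k) - ψ (i m - k) * ψs (j m))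
        + (c * a m) • (ψ (i m) * ψs (j m - 1) - ψ (i m + 1) * ψs (j m)))
      - (a m • (ψ (i m) * ψs (j m + k) - ψ (i m - k) * ψs (j m))
        + (c * a m) • (ψ (i m) * ψs (j m - 1) - ψ (i m + 1) * ψs (j m))) * x n
      = -(if i n = j m + k then (a n * a m) • (ψ (i m) * ψs (j n)) else 0)
        - (if i m = j n + k then (a n * a m) • (ψ (i n) * ψs (j m)) else 0) := by
    intro n m
    have step : x n * (a m • (ψ (i m) * ψs (j m + k) - ψ (i m - k) * ψs (j m))
        + (c * a m) • (ψ (i m) * ψs (j m - 1) - ψ (i m + 1) * ψs (j m)))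
      - (a m • (ψ (i m) * ψs (j m + k) - ψ (i m - k) * ψs (j m))
        + (c * a m) • (ψ (i m) * ψs (j m - 1) - ψ (i m + 1) * ψs (j m))) * x n
      = (a n * a m) • (((ψ (i n) * ψs (j n)) * (ψ (i m) * ψs (j m + k))
            - (ψ (i m) * ψs (j m + k)) * (ψ (i n) * ψs (j n)))
          - ((ψ (i n) * ψs (j n)) * (ψ (i m - k) * ψs (j m))
            - (ψ (i m - k) * ψs (j m)) * (ψ (i n) * ψs (j n))))
        + (a n * (c * a m)) • (((ψ (i n) * ψs (j n)) * (ψ (i m) * ψs (j m - 1))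
            - (ψ (i m) * ψs (j m - 1)) * (ψ (i n) * ψs (j n)))
          - ((ψ (i n) * ψs (j n)) * (ψ (i m + 1) * ψs (j m))
            - (ψ (i m + 1) * ψs (j m)) * (ψ (i n) * ψs (j n)))) := by
      rw [hx_def]
      dsimp only
      simp only [mul_add, add_mul, mul_sub, sub_mul, smul_mul_assoc, mul_smul_comm,
        smul_sub, smul_add, smul_smul]
      module
    rw [step, comm1 n m, comm2 n m, comm3 n m, comm4 n m]
    split_ifs <;> simp [smul_smul] <;> module
  have hDX : DD * X = X * DD - EE := by
    have key : X * DD - DD * X = EE := by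
      rw [hXsum, hDD, Finset.sum_mul, Finset.mul_sum, ← Finset.sum_sub_distrib]
      have e : ∀ n ∈ (Finset.univ : Finset (Fin M)),
          x n * (∑ m, (a m • (ψ (i m) * ψs (j m + k) - ψ (i m - k) * ψs (j m))
            + (c * a m) • (ψ (i m) * ψs (j m - 1) - ψ (i m + 1) * ψs (j m))))
          - (∑ m, (a m • (ψ (i m) * ψs (j m + k) - ψ (i m - k) * ψs (j m))
            + (c * a m) • (ψ (i m) * ψs (j m - 1) - ψ (i m + 1) * ψs (j m)))) * x n
          = ∑ m, (-(if i n = j m + k then (a n * a m) • (ψ (i m) * ψs (j n)) else 0)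
              - (if i m = j n + k then (a n * a m) • (ψ (i n) * ψs (j m)) else 0)) := by
        intro n _
        rw [Finset.mul_sum, Finset.sum_mul, ← Finset.sum_sub_distrib]
        exact Finset.sum_congr rfl fun m _ => hper n m
      rw [Finset.sum_congr rfl e]
      have hsplit : ∑ n : Fin M, ∑ m : Fin M,
          (-(if i n = j m + k then (a n * a m) • (ψ (i m) * ψs (j n)) else 0)
            - (if i m = j n + k then (a n * a m) • (ψ (i n) * ψs (j m)) else 0))
          = -(∑ n : Fin M, ∑ m : Fin M,
              (if i n = j m + k then (a n * a m) • (ψ (i m) * ψs (j n)) else 0))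
            - ∑ n : Fin M, ∑ m : Fin M,
              (if i m = j n + k then (a n * a m) • (ψ (i n) * ψs (j m)) else 0) := by
        rw [← Finset.sum_neg_distrib, ← Finset.sum_sub_distrib]
        refine Finset.sum_congr rfl fun n _ => ?_
        rw [← Finset.sum_neg_distrib, ← Finset.sum_sub_distrib]
      rw [hsplit]
      have hA : (∑ n : Fin M, ∑ m : Fin M,
          (if i n = j m + k then (a n * a m) • (ψ (i m) * ψs (j n)) else 0)) = SS := by
        rw [Finset.sum_comm, hSS]
        refine Finset.sum_congr rfl fun p _ => Finset.sum_congr rfl fun m _ => ?_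
        rw [ite_smul, zero_smul]
      have hB : (∑ n : Fin M, ∑ m : Fin M,
          (if i m = j n + k then (a n * a m) • (ψ (i n) * ψs (j m)) else 0)) = SS := by
        rw [hSS]
        refine Finset.sum_congr rfl fun p _ => Finset.sum_congr rfl fun m _ => ?_
        rw [ite_smul, zero_smul, mul_comm (a p) (a m)]
      rw [hA, hB, hEE]
      module
    rw [← key]
    abel
  -- products of the x's
  set PP : Finset (Fin M) → R := fun s => s.noncommProd x (fun a _ b _ _ => hxcomm a b)
    with hPP
  have hXpow : ∀ n : ℕ, X ^ n = n.factorial • ∑ T ∈ Finset.powersetCard n Finset.univ, PP T := by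
    intro n
    rw [hXsum, stmt4_sum_pow x hxcomm hxsq n Finset.univ, hPP]
  have hX1 : X ^ (M + 1) = 0 := by
    rw [hXpow (M + 1), Finset.powersetCard_eq_empty.mpr (by simp), Finset.sum_empty,
      smul_zero]
  have hPP_erase : ∀ (s : Finset (Fin M)) (t : Fin M), t ∈ s → PP s = PP (s.erase t) * x t := by
    intro s t ht
    rw [hPP]
    exact (Finset.noncommProd_erase_mul s ht x _).symm
  have hPPkill : ∀ (s : Finset (Fin M)) (t : Fin M), t ∈ s → ∀ b : ℤ,
      PP s * (ψ (i t) * ψs b) = 0 := by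
    intro s t ht b
    rw [hPP_erase s t ht, mul_assoc, kx1 t b, mul_zero]
  have hPPabs : ∀ (s : Finset (Fin M)) (t : Fin M), t ∈ s → ∀ b : ℤ,
      PP s * (ψ b * ψs (j t)) = if b = j t then PP s else 0 := by
    intro s t ht b
    rw [hPP_erase s t ht, mul_assoc, kx2 t b]
    split_ifs
    · rw [← hPP_erase s t ht]
    · rw [mul_zero]
  have hpcM : Finset.powersetCard M (Finset.univ : Finset (Fin M)) = {Finset.univ} := by
    have h := Finset.powersetCard_self (Finset.univ : Finset (Fin M))
    rw [Finset.card_fin] at h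
    exact h
  have hXM : X ^ M = M.factorial • PP Finset.univ := by
    rw [hXpow M, hpcM, Finset.sum_singleton]
  have hSSkill : PP Finset.univ * SS = 0 := by
    rw [hSS, Finset.mul_sum]
    refine Finset.sum_eq_zero fun p _ => ?_
    rw [Finset.mul_sum]
    refine Finset.sum_eq_zero fun m _ => ?_
    rw [mul_smul_comm, hPPkill Finset.univ p (Finset.mem_univ p) (j m), smul_zero]
  have hXE : X ^ M * EE = 0 := by
    rw [hXM, smul_mul_assoc, hEE, mul_smul_comm, hSSkill, smul_zero, smul_zero]
  -- the key quantitative relation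
  have hPD : PP Finset.univ * DD
      = (∑ m, -(if i m = j m + k then a m else 0)) • PP Finset.univ := by
    rw [hDD, Finset.mul_sum, Finset.sum_smul]
    refine Finset.sum_congr rfl fun m _ => ?_
    rw [mul_add, mul_smul_comm, mul_smul_comm, mul_sub, mul_sub,
      hPPkill Finset.univ m (Finset.mem_univ m) (j m + k),
      hPPkill Finset.univ m (Finset.mem_univ m) (j m - 1),
      hPPabs Finset.univ m (Finset.mem_univ m) (i m - k),
      hPPabs Finset.univ m (Finset.mem_univ m) (i m + 1),
      if_neg (show ¬ i m + 1 = j m from by have := hi m; have := hj m; omega)]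
    simp only [hcond m m, zero_sub, sub_zero, sub_self, smul_zero, add_zero, smul_neg]
    split_ifs <;> simp
  have hPEsum : ∀ t : Fin M, PP (Finset.univ.erase t) * EE
      = ((-2) * (if i t = j t + k then a t else 0)) • PP Finset.univ := by
    intro t
    rw [hEE, mul_smul_comm]
    have hinner : PP (Finset.univ.erase t) * SS
        = (if i t = j t + k then a t else 0) • PP Finset.univ := by
      rw [hSS, Finset.mul_sum]
      rw [Finset.sum_eq_single_of_mem t (Finset.mem_univ t) (fun p _ hpt => ?side1)]
      · rw [Finset.mul_sum]
        rw [Finset.sum_eq_single_of_mem t (Finset.mem_univ t) (fun m _ hmt => ?side2)]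
        · rw [mul_smul_comm]
          have hxq : a t • (PP (Finset.univ.erase t) * (ψ (i t) * ψs (j t)))
              = PP Finset.univ := by
            rw [← mul_smul_comm, hPP_erase Finset.univ t (Finset.mem_univ t), hx_def]
          split_ifs with hc
          · rw [mul_smul, hxq]
          · simp
        case side2 =>
          rw [mul_smul_comm,
            hPPabs (Finset.univ.erase t) m
              (Finset.mem_erase.mpr ⟨hmt, Finset.mem_univ m⟩) (i t),
            if_neg (hine t m), smul_zero]
      case side1 =>
        rw [Finset.mul_sum]
        refine Finset.sum_eq_zero fun m _ => ?_
        rw [mul_smul_comm,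
          hPPkill (Finset.univ.erase t) p
            (Finset.mem_erase.mpr ⟨hpt, Finset.mem_univ p⟩) (j m), smul_zero]
    rw [hinner, smul_smul]
  have hXD : (2 : ℚ) • (X ^ M * DD) = ((M : ℕ) : ℚ) • (X ^ (M - 1) * EE) := by
    by_cases hM0 : M = 0
    · have hDD0 : DD = 0 := by
        rw [hDD]
        haveI : IsEmpty (Fin M) := by subst hM0; infer_instance
        rw [Finset.univ_eq_empty, Finset.sum_empty]
      rw [hDD0, hM0]
      simp
    · obtain ⟨M'', rfl⟩ := Nat.exists_eq_succ_of_ne_zero hM0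
      have hinj : ∀ t ∈ (Finset.univ : Finset (Fin (M'' + 1))), ∀ t' ∈ Finset.univ,
          Finset.univ.erase t = Finset.univ.erase t' → t = t' := by
        intro t _ t' _ h
        by_contra hne
        have : t ∈ Finset.univ.erase t := by
          rw [h]; exact Finset.mem_erase.mpr ⟨hne, Finset.mem_univ t⟩
        exact Finset.notMem_erase t Finset.univ this
      have him : Finset.powersetCard M'' (Finset.univ : Finset (Fin (M'' + 1)))
          = Finset.univ.image (fun t => Finset.univ.erase t) := by
        ext T
        simp only [Finset.mem_powersetCard, Finset.mem_image]
        constructor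
        · rintro ⟨hsub, hcard⟩
          have hc1 : (Finset.univ \ T).card = 1 := by
            rw [Finset.card_sdiff_of_subset hsub, Finset.card_fin, hcard]
            omega
          obtain ⟨t, ht⟩ := Finset.card_eq_one.mp hc1
          refine ⟨t, Finset.mem_univ t, ?_⟩
          rw [Finset.erase_eq, ← ht, Finset.sdiff_sdiff_self_left, Finset.univ_inter]
        · rintro ⟨t, -, rfl⟩
          refine ⟨Finset.subset_univ _, ?_⟩
          rw [Finset.card_erase_of_mem (Finset.mem_univ t), Finset.card_fin]
          omega
      have hXM1 : X ^ M'' = M''.factorial • ∑ t : Fin (M'' + 1), PP (Finset.univ.erase t) := by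
        rw [hXpow M'', him, Finset.sum_image hinj]
      rw [show M'' + 1 - 1 = M'' from rfl, hXM, hXM1,
        ← Nat.cast_smul_eq_nsmul ℚ, ← Nat.cast_smul_eq_nsmul ℚ,
        smul_mul_assoc, smul_mul_assoc, hPD, Finset.sum_mul]
      rw [Finset.sum_congr rfl (fun t _ => hPEsum t)]
      rw [← Finset.sum_smul, smul_smul, smul_smul, smul_smul, smul_smul]
      congr 1
      rw [Finset.sum_neg_distrib, ← Finset.mul_sum, Nat.factorial_succ]
      push_cast
      ring
  have main := stmt4_conj M X (Λ k + c • Λ (-1)) DD EE g gi hYX hDX hEX hX1 hXE hXD hg hgi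
  rw [main]
  have e3 : (2 : ℚ)⁻¹ • EE = -SS := by
    rw [hEE, smul_smul, show (2 : ℚ)⁻¹ * (-2) = -1 from by norm_num, neg_smul, one_smul]
  have e1 : ∑ m, a m • (ψ (i m - k) * ψs (j m) - ψ (i m) * ψs (j m + k))
      = -∑ m, a m • (ψ (i m) * ψs (j m + k) - ψ (i m - k) * ψs (j m)) := by
    rw [← Finset.sum_neg_distrib]
    exact Finset.sum_congr rfl fun m _ => by rw [← smul_neg, neg_sub]
  have e2 : c • ∑ m, a m • (ψ (i m + 1) * ψs (j m) - ψ (i m) * ψs (j m - 1))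
      = -∑ m, (c * a m) • (ψ (i m) * ψs (j m - 1) - ψ (i m + 1) * ψs (j m)) := by
    rw [Finset.smul_sum, ← Finset.sum_neg_distrib]
    refine Finset.sum_congr rfl fun m _ => ?_
    rw [smul_smul, ← smul_neg, neg_sub]
  rw [e3, e1, e2, hDD, Finset.sum_add_distrib]
  abel
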